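/- Let α be an infinite type and let F be the free group on α. Then every Aut-invariant homogeneous quasimorphism f : F → ℝ is identically zero. (Indeed, every element of F lies in the subgroup generated by a cofinite set of basis elements, hence all its powers are autocommutators, so f is bounded on cyclic subgroups and therefore vanishes.) -/

import Mathlib

private lemma freegroup_hom_fix {α : Type*} [DecidableEq α] (h : FreeGroup α →* FreeGroup α)
    (g : FreeGroup α)
    (H : ∀ x ∈ g.toWord.map Prod.fst, h (FreeGroup.of x) = FreeGroup.of x) :
    h g = g := by
  conv_lhs => rw [← FreeGroup.mk_toWord (x := g)]
  conv_rhs => rw [← FreeGroup.mk_toWord (x := g)]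
  set L := g.toWord with hL
  have key : FreeGroup.mk L =
      List.prod (L.map fun x => cond x.2 (FreeGroup.of x.1) (FreeGroup.of x.1)⁻¹) := by
    rw [← FreeGroup.lift_mk, FreeGroup.lift_of_apply]
  rw [key, map_list_prod, List.map_map]
  congr 1
  apply List.map_congr_left
  rintro ⟨x, b⟩ hp
  have hx : h (FreeGroup.of x) = FreeGroup.of x := H x (List.mem_map_of_mem hp)
  cases b <;> simp [hx]

/-- on a free group of infinite rank, every `Aut`-invariant homogeneous
quasimorphism vanishes identically. -/
theorem aut_invariant_qm_trivial_on_infinite_rank_free_group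
    {α : Type*} [Infinite α] (f : FreeGroup α → ℝ)
    (hqm : ∃ D : ℝ, ∀ g h : FreeGroup α, |f g + f h - f (g * h)| ≤ D)
    (hhom : ∀ (g : FreeGroup α) (n : ℤ), f (g ^ n) = n * f g)
    (hinv : ∀ (φ : FreeGroup α ≃* FreeGroup α) (g : FreeGroup α), f (φ g) = f g) :
    ∀ g : FreeGroup α, f g = 0 := by
  classical
  obtain ⟨D, hD⟩ := hqm
  intro g
  -- pick a letter not occurring in g
  obtain ⟨a, ha⟩ := Infinite.exists_notMem_finset (g.toWord.map Prod.fst).toFinset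
  have ha' : ∀ x ∈ g.toWord.map Prod.fst, x ≠ a := by
    intro x hx
    rintro rfl
    exact ha (List.mem_toFinset.mpr hx)
  -- key: |f (g^n)| ≤ D for every n
  have key : ∀ n : ℤ, |f (g ^ n)| ≤ D := by
    intro n
    -- automorphism sending `of a ↦ g^n * of a` and fixing other generators
    set u : FreeGroup α := g ^ n with hu
    have mkhom : ∀ v : FreeGroup α,
        (FreeGroup.lift (fun x => if x = a then v * FreeGroup.of x else FreeGroup.of x)) g
          = g := by
      intro v
      apply freegroup_hom_fix
      intro x hx
      simp [FreeGroup.lift_apply_of, ha' x hx]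
    set Φ : FreeGroup α →* FreeGroup α :=
      FreeGroup.lift (fun x => if x = a then u * FreeGroup.of x else FreeGroup.of x) with hΦ
    set Ψ : FreeGroup α →* FreeGroup α :=
      FreeGroup.lift (fun x => if x = a then u⁻¹ * FreeGroup.of x else FreeGroup.of x) with hΨ
    have hΦg : Φ g = g := mkhom u
    have hΨg : Ψ g = g := mkhom u⁻¹
    have hΦu : Φ u = u := by rw [hu, map_zpow, hΦg]
    have hΨu : Ψ u = u := by rw [hu, map_zpow, hΨg]
    have comp1 : ∀ y, Φ (Ψ y) = y := by
      have : Φ.comp Ψ = MonoidHom.id _ := by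
        apply FreeGroup.ext_hom
        intro x
        by_cases hx : x = a
        · have hΨa : Ψ (FreeGroup.of x) = u⁻¹ * FreeGroup.of x := by
            simp [Ψ, FreeGroup.lift_apply_of, hx]
          rw [MonoidHom.comp_apply, hΨa, map_mul, map_inv, hΦu, MonoidHom.id_apply]
          simp [Φ, FreeGroup.lift_apply_of, hx]
        · simp [Φ, Ψ, FreeGroup.lift_apply_of, hx]
      intro y
      exact DFunLike.congr_fun this y
    have comp2 : ∀ y, Ψ (Φ y) = y := by
      have : Ψ.comp Φ = MonoidHom.id _ := by
        apply FreeGroup.ext_hom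
        intro x
        by_cases hx : x = a
        · have hΦa : Φ (FreeGroup.of x) = u * FreeGroup.of x := by
            simp [Φ, FreeGroup.lift_apply_of, hx]
          rw [MonoidHom.comp_apply, hΦa, map_mul, hΨu, MonoidHom.id_apply]
          simp [Ψ, FreeGroup.lift_apply_of, hx]
        · simp [Φ, Ψ, FreeGroup.lift_apply_of, hx]
      intro y
      exact DFunLike.congr_fun this y
    let φ : FreeGroup α ≃* FreeGroup α :=
      { toFun := Φ, invFun := Ψ, left_inv := comp2, right_inv := comp1,
        map_mul' := map_mul Φ }
    have hφa : φ (FreeGroup.of a) = u * FreeGroup.of a := by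
      show Φ (FreeGroup.of a) = _
      simp [Φ, FreeGroup.lift_apply_of]
    have h1 : f (u * FreeGroup.of a) = f (FreeGroup.of a) := by
      rw [← hφa, hinv]
    have h2 := hD u (FreeGroup.of a)
    rw [h1] at h2
    calc |f u| = |f u + f (FreeGroup.of a) - f (FreeGroup.of a)| := by ring_nf
      _ ≤ D := h2
  -- conclude
  by_contra hne
  have hpos : 0 < |f g| := abs_pos.mpr hne
  obtain ⟨n, hn⟩ := exists_nat_gt (D / |f g|)
  have h1 := key n
  rw [hhom] at h1
  rw [abs_mul] at h1
  have : (D / |f g|) < n := hn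
  have hn' : |((n : ℤ) : ℝ)| = (n : ℝ) := by simp
  rw [hn'] at h1
  have : D < n * |f g| := by
    rwa [div_lt_iff₀ hpos] at this
  linarith
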